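/- Let q be prime, k ≥ 2, and let L ≥ 1 be a natural number with L² < q. Then there exists a finite set I of vectors i : Fin k → ℕ, each with all entries in {1, …, L}, such that |I| > L^k/2 and for every two distinct i, j ∈ I their reductions modulo q are linearly independent over ZMod q (in particular each reduction is nonzero and no one is a ZMod q-scalar multiple of another). -/
import Mathlib

/-- Auxiliary map sending a non-coprime pair to a coprime pair, injectively. -/
def pmap (a b : ℕ) : ℕ × ℕ :=
  if b ≤ a then (a / Nat.gcd a b, b / Nat.gcd a b + (Nat.gcd a b - 1) * (a / Nat.gcd a b))
  else (a / Nat.gcd a b + (Nat.gcd a b - 1) * (b / Nat.gcd a b), b / Nat.gcd a b)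

lemma pmap_spec (L a b : ℕ) (ha1 : 1 ≤ a) (haL : a ≤ L) (hb1 : 1 ≤ b) (hbL : b ≤ L)
    (h : Nat.gcd a b ≠ 1) :
    (1 ≤ (pmap a b).1 ∧ (pmap a b).1 ≤ L) ∧ (1 ≤ (pmap a b).2 ∧ (pmap a b).2 ≤ L) ∧
    Nat.Coprime (pmap a b).1 (pmap a b).2 ∧
    (b ≤ a → (pmap a b).1 < (pmap a b).2) ∧ (a < b → (pmap a b).2 < (pmap a b).1) := by
  set g := Nat.gcd a b with hg
  have hg0 : 0 < g := Nat.gcd_pos_of_pos_left b (by omega)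
  have hg2 : 2 ≤ g := by omega
  have hxa : a / g * g = a := Nat.div_mul_cancel (Nat.gcd_dvd_left a b)
  have hyb : b / g * g = b := Nat.div_mul_cancel (Nat.gcd_dvd_right a b)
  set x := a / g with hx
  set y := b / g with hy
  have hx1 : 1 ≤ x := by
    rcases Nat.eq_zero_or_pos x with h0 | h0
    · rw [h0] at hxa; omega
    · exact h0
  have hy1 : 1 ≤ y := by
    rcases Nat.eq_zero_or_pos y with h0 | h0
    · rw [h0] at hyb; omega
    · exact h0
  have hg1 : g - 1 + 1 = g := by omega
  have hgx : x + (g - 1) * x = g * x := by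
    conv_rhs => rw [← hg1]
    rw [Nat.succ_mul]
    omega
  have hgy : y + (g - 1) * y = g * y := by
    conv_rhs => rw [← hg1]
    rw [Nat.succ_mul]
    omega
  have hxLe : x ≤ g * x := Nat.le_mul_of_pos_left x hg0
  have hyLe : y ≤ g * y := Nat.le_mul_of_pos_left y hg0
  have hxg : g * x = a := by rw [Nat.mul_comm]; exact hxa
  have hyg : g * y = b := by rw [Nat.mul_comm]; exact hyb
  have hcop : Nat.Coprime x y := Nat.coprime_div_gcd_div_gcd hg0
  have hxx : x ≤ (g - 1) * x := Nat.le_mul_of_pos_left x (by omega)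
  have hyy : y ≤ (g - 1) * y := Nat.le_mul_of_pos_left y (by omega)
  by_cases hba : b ≤ a
  · have hyx : y ≤ x := Nat.div_le_div_right hba
    rw [pmap, if_pos hba]
    simp only [← hx, ← hy, ← hg]
    refine ⟨⟨hx1, by omega⟩, ⟨by omega, ?_⟩, ?_, fun _ => by omega, fun hab => by omega⟩
    · have : y + (g - 1) * x ≤ x + (g - 1) * x := by omega
      omega
    · exact (Nat.coprime_add_mul_right_right x y (g - 1)).mpr hcop
  · have hab : a < b := by omega
    have hxy : x ≤ y := Nat.div_le_div_right (le_of_lt hab)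
    rw [pmap, if_neg hba]
    simp only [← hx, ← hy, ← hg]
    refine ⟨⟨by omega, ?_⟩, ⟨hy1, by omega⟩, ?_, fun hba' => by omega, fun _ => by omega⟩
    · have : x + (g - 1) * y ≤ y + (g - 1) * y := by omega
      omega
    · exact Nat.Coprime.symm ((Nat.coprime_add_mul_right_right y x (g - 1)).mpr hcop.symm)

lemma pmap_unique_aux (x y g y' g' : ℕ) (hy1 : 1 ≤ y) (hyx : y ≤ x) (hy1' : 1 ≤ y')
    (hyx' : y' ≤ x) (hg : 2 ≤ g) (hg' : 2 ≤ g')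
    (he : y + (g - 1) * x = y' + (g' - 1) * x) : y = y' ∧ g = g' := by
  rcases Nat.lt_trichotomy g g' with hlt | heq | hlt
  · exfalso
    have h1 : (g' - 1) * x = (g - 1) * x + (g' - g) * x := by
      rw [← Nat.add_mul]; congr 1; omega
    have h2 : x ≤ (g' - g) * x := Nat.le_mul_of_pos_left x (by omega)
    omega
  · subst heq
    exact ⟨by omega, rfl⟩
  · exfalso
    have h1 : (g - 1) * x = (g' - 1) * x + (g - g') * x := by
      rw [← Nat.add_mul]; congr 1; omega
    have h2 : x ≤ (g - g') * x := Nat.le_mul_of_pos_left x (by omega)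
    omega

lemma pmap_inj (a b a' b' : ℕ) (ha1 : 1 ≤ a) (hb1 : 1 ≤ b) (ha1' : 1 ≤ a') (hb1' : 1 ≤ b')
    (h : Nat.gcd a b ≠ 1) (h' : Nat.gcd a' b' ≠ 1) (he : pmap a b = pmap a' b') :
    a = a' ∧ b = b' := by
  have hs := pmap_spec (max a b) a b ha1 (le_max_left _ _) hb1 (le_max_right _ _) h
  have hs' := pmap_spec (max a' b') a' b' ha1' (le_max_left _ _) hb1' (le_max_right _ _) h'
  set g := Nat.gcd a b with hg
  set g' := Nat.gcd a' b' with hg'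
  have hg0 : 0 < g := Nat.gcd_pos_of_pos_left b (by omega)
  have hg0' : 0 < g' := Nat.gcd_pos_of_pos_left b' (by omega)
  have hg2 : 2 ≤ g := by omega
  have hg2' : 2 ≤ g' := by omega
  have hxa : a / g * g = a := Nat.div_mul_cancel (Nat.gcd_dvd_left a b)
  have hyb : b / g * g = b := Nat.div_mul_cancel (Nat.gcd_dvd_right a b)
  have hxa' : a' / g' * g' = a' := Nat.div_mul_cancel (Nat.gcd_dvd_left a' b')
  have hyb' : b' / g' * g' = b' := Nat.div_mul_cancel (Nat.gcd_dvd_right a' b')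
  have hx1 : 1 ≤ a / g := by
    rcases Nat.eq_zero_or_pos (a / g) with h0 | h0
    · rw [h0] at hxa; omega
    · exact h0
  have hy1 : 1 ≤ b / g := by
    rcases Nat.eq_zero_or_pos (b / g) with h0 | h0
    · rw [h0] at hyb; omega
    · exact h0
  have hx1' : 1 ≤ a' / g' := by
    rcases Nat.eq_zero_or_pos (a' / g') with h0 | h0
    · rw [h0] at hxa'; omega
    · exact h0
  have hy1' : 1 ≤ b' / g' := by
    rcases Nat.eq_zero_or_pos (b' / g') with h0 | h0
    · rw [h0] at hyb'; omega
    · exact h0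
  by_cases hba : b ≤ a <;> by_cases hba' : b' ≤ a'
  · -- both branch 1
    have hyx : b / g ≤ a / g := Nat.div_le_div_right hba
    have hyx' : b' / g' ≤ a' / g' := Nat.div_le_div_right hba'
    rw [pmap, if_pos hba, pmap, if_pos hba'] at he
    simp only [Prod.mk.injEq] at he
    obtain ⟨he1, he2⟩ := he
    rw [← hg, ← hg'] at he1 he2
    rw [← he1] at he2 hyx'
    obtain ⟨hyy, hgg⟩ := pmap_unique_aux (a / g) (b / g) g (b' / g') g' hy1 hyx hy1' hyx'
      hg2 hg2' he2
    constructor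
    · rw [← hxa, ← hxa', ← he1, ← hgg]
    · rw [← hyb, ← hyb', ← hyy, ← hgg]
  · -- mixed: impossible
    exfalso
    have l1 := hs.2.2.2.1 hba
    have l2 := hs'.2.2.2.2 (by omega)
    rw [he] at l1
    omega
  · exfalso
    have l1 := hs.2.2.2.2 (by omega)
    have l2 := hs'.2.2.2.1 hba'
    rw [he] at l1
    omega
  · -- both branch 2
    have hxy : a / g ≤ b / g := Nat.div_le_div_right (by omega)
    have hxy' : a' / g' ≤ b' / g' := Nat.div_le_div_right (by omega)
    rw [pmap, if_neg hba, pmap, if_neg hba'] at he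
    simp only [Prod.mk.injEq] at he
    obtain ⟨he1, he2⟩ := he
    rw [← hg, ← hg'] at he1 he2
    rw [← he2] at he1 hxy'
    obtain ⟨hxx, hgg⟩ := pmap_unique_aux (b / g) (a / g) g (a' / g') g' hx1 hxy hx1' hxy'
      hg2 hg2' he1
    constructor
    · rw [← hxa, ← hxa', ← hxx, ← hgg]
    · rw [← hyb, ← hyb', ← he2, ← hgg]

/-- For `q` prime, `k ≥ 2` and `L ≥ 1` with `L² < q`, there is a finite set `I` of vectors
`i : Fin k → ℕ` with all entries in `{1, …, L}`, with `|I| > L^k/2`, whose reductions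
modulo `q` are pairwise linearly independent over `ZMod q` (each reduction is nonzero and
no one is a `ZMod q`-scalar multiple of another). -/
theorem exists_pairwise_independent_family (q k : ℕ) (hq : Nat.Prime q) (hk : 2 ≤ k)
    (L : ℕ) (hL : 1 ≤ L) (hLq : L ^ 2 < q) :
    ∃ I : Finset (Fin k → ℕ),
      (∀ i ∈ I, ∀ m, i m ∈ Finset.Icc 1 L) ∧
      (L : ℝ) ^ k / 2 < (I.card : ℝ) ∧
      (∀ i ∈ I, (fun m => ((i m : ZMod q))) ≠ 0) ∧
      (∀ i ∈ I, ∀ j ∈ I, i ≠ j →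
        ∀ c : ZMod q, (fun m => ((i m : ZMod q))) ≠ c • (fun m => ((j m : ZMod q)))) := by
  have hLq' : L < q := lt_of_le_of_lt (by nlinarith) hLq
  set z0 : Fin k := ⟨0, by omega⟩ with hz0
  set z1 : Fin k := ⟨1, by omega⟩ with hz1
  have hz : z0 ≠ z1 := by simp [hz0, hz1, Fin.ext_iff]
  set B : Finset (Fin k → ℕ) := Fintype.piFinset (fun _ : Fin k => Finset.Icc 1 L) with hB
  have hmemB : ∀ f : Fin k → ℕ, f ∈ B ↔ ∀ m, 1 ≤ f m ∧ f m ≤ L := by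
    intro f
    rw [hB, Fintype.mem_piFinset]
    simp [Finset.mem_Icc]
  have hBcard : B.card = L ^ k := by
    rw [hB, Fintype.card_piFinset]
    simp
  set I := B.filter (fun i => Nat.gcd (i z0) (i z1) = 1) with hI
  set N := B.filter (fun i => ¬ Nat.gcd (i z0) (i z1) = 1) with hN
  have hsplit : I.card + N.card = L ^ k := by
    rw [hI, hN, ← hBcard]
    exact Finset.card_filter_add_card_filter_not _
  -- the injection
  set F : (Fin k → ℕ) → (Fin k → ℕ) := fun i m =>
    if m = z0 then (pmap (i z0) (i z1)).1
    else if m = z1 then (pmap (i z0) (i z1)).2 else i m with hF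
  have hFz0 : ∀ i, F i z0 = (pmap (i z0) (i z1)).1 := by intro i; simp [hF]
  have hFz1 : ∀ i, F i z1 = (pmap (i z0) (i z1)).2 := by
    intro i; simp [hF, hz.symm]
  set ones : Fin k → ℕ := fun _ => 1 with hones
  have honesI : ones ∈ I := by
    rw [hI, Finset.mem_filter]
    refine ⟨(hmemB ones).mpr (fun m => ⟨le_refl 1, hL⟩), by simp [hones]⟩
  have hmaps : ∀ i ∈ N, F i ∈ I.erase ones := by
    intro i hi
    rw [hN, Finset.mem_filter] at hi
    obtain ⟨hiB, hig⟩ := hi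
    have hbnd := (hmemB i).mp hiB
    have hs := pmap_spec L (i z0) (i z1) (hbnd z0).1 (hbnd z0).2 (hbnd z1).1 (hbnd z1).2 hig
    have hne01 : F i z0 ≠ F i z1 := by
      rw [hFz0, hFz1]
      rcases le_or_gt (i z1) (i z0) with hc | hc
      · exact Nat.ne_of_lt (hs.2.2.2.1 hc)
      · exact Nat.ne_of_lt' (hs.2.2.2.2 hc)
    rw [Finset.mem_erase]
    constructor
    · intro hcon
      rw [hcon] at hne01
      simp [hones] at hne01
    · rw [hI, Finset.mem_filter]
      constructor
      · rw [hmemB]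
        intro m
        by_cases hm0 : m = z0
        · subst hm0; rw [hFz0]; exact hs.1
        · by_cases hm1 : m = z1
          · subst hm1; rw [hFz1]; exact hs.2.1
          · have : F i m = i m := by simp [hF, hm0, hm1]
            rw [this]; exact hbnd m
      · rw [hFz0, hFz1]; exact hs.2.2.1
  have hinj : Set.InjOn F N := by
    intro i hi j hj he
    rw [hN, Finset.mem_coe, Finset.mem_filter] at hi hj
    obtain ⟨hiB, hig⟩ := hi
    obtain ⟨hjB, hjg⟩ := hj
    have hbi := (hmemB i).mp hiB
    have hbj := (hmemB j).mp hjB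
    have hpe : pmap (i z0) (i z1) = pmap (j z0) (j z1) := by
      have e0 := congrFun he z0
      have e1 := congrFun he z1
      rw [hFz0, hFz0] at e0
      rw [hFz1, hFz1] at e1
      exact Prod.ext e0 e1
    obtain ⟨ea, eb⟩ := pmap_inj (i z0) (i z1) (j z0) (j z1)
      (hbi z0).1 (hbi z1).1 (hbj z0).1 (hbj z1).1 hig hjg hpe
    funext m
    by_cases hm0 : m = z0
    · subst hm0; exact ea
    · by_cases hm1 : m = z1
      · subst hm1; exact eb
      · have h1 := congrFun he m
        simpa [hF, hm0, hm1] using h1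
  have hNI : N.card < I.card := by
    have h1 : N.card ≤ (I.erase ones).card :=
      Finset.card_le_card_of_injOn F hmaps hinj
    have h2 : (I.erase ones).card = I.card - 1 := Finset.card_erase_of_mem honesI
    have h3 : 1 ≤ I.card := Finset.card_pos.mpr ⟨ones, honesI⟩
    omega
  -- cast helpers
  have hcast : ∀ x y : ℕ, x < q → y < q → ((x : ZMod q) = (y : ZMod q)) → x = y := by
    intro x y hx hy hxy
    have := (ZMod.natCast_eq_natCast_iff x y q).mp hxy
    rwa [Nat.ModEq, Nat.mod_eq_of_lt hx, Nat.mod_eq_of_lt hy] at this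
  refine ⟨I, ?_, ?_, ?_, ?_⟩
  · intro i hi m
    rw [hI, Finset.mem_filter] at hi
    have := (hmemB i).mp hi.1 m
    rw [Finset.mem_Icc]
    exact this
  · have : L ^ k < 2 * I.card := by omega
    have hcast2 : ((L ^ k : ℕ) : ℝ) < ((2 * I.card : ℕ) : ℝ) := by exact_mod_cast this
    push_cast at hcast2
    linarith
  · intro i hi hcon
    rw [hI, Finset.mem_filter] at hi
    have hbi := (hmemB i).mp hi.1
    have h0 := congrFun hcon z0
    simp only [Pi.zero_apply] at h0
    have hb0 := hbi z0
    have : i z0 = 0 := by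
      apply hcast (i z0) 0 (by omega) (by omega)
      simpa using h0
    omega
  · intro i hi j hj hij c hcon
    rw [hI, Finset.mem_filter] at hi hj
    have hbi := (hmemB i).mp hi.1
    have hbj := (hmemB j).mp hj.1
    -- cross relations
    have hrel : ∀ m n, i m * j n = i n * j m := by
      intro m n
      have hm := congrFun hcon m
      have hn := congrFun hcon n
      simp only [Pi.smul_apply, smul_eq_mul] at hm hn
      have hz : ((i m * j n : ℕ) : ZMod q) = ((i n * j m : ℕ) : ZMod q) := by
        push_cast
        rw [hm, hn]
        ring
      apply hcast  _ _ _ _ hz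
      · calc i m * j n ≤ L * L := Nat.mul_le_mul (hbi m).2 (hbj n).2
          _ = L ^ 2 := (sq L).symm
          _ < q := hLq
      · calc i n * j m ≤ L * L := Nat.mul_le_mul (hbi n).2 (hbj m).2
          _ = L ^ 2 := (sq L).symm
          _ < q := hLq
    apply hij
    have h01 : i z0 * j z1 = i z1 * j z0 := hrel z0 z1
    have hcopi : Nat.Coprime (i z0) (i z1) := hi.2
    have hcopj : Nat.Coprime (j z0) (j z1) := hj.2
    have d1 : i z0 ∣ j z0 := by
      have hd : i z0 ∣ j z0 * i z1 := ⟨j z1, by rw [Nat.mul_comm]; exact h01.symm⟩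
      exact (Nat.Coprime.dvd_of_dvd_mul_right hcopi hd)
    have d2 : j z0 ∣ i z0 := by
      have hd : j z0 ∣ i z0 * j z1 := ⟨i z1, by rw [h01]; ring⟩
      exact (Nat.Coprime.dvd_of_dvd_mul_right hcopj hd)
    have e0 : i z0 = j z0 := Nat.dvd_antisymm d1 d2
    funext m
    have hm0 : i m * j z0 = i z0 * j m := hrel m z0
    rw [← e0] at hm0
    have hpos : 0 < i z0 := (hbi z0).1
    calc i m = i m * i z0 / i z0 := by rw [Nat.mul_div_cancel _ hpos]
      _ = i z0 * j m / i z0 := by rw [hm0]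
      _ = j m := by rw [Nat.mul_div_cancel_left _ hpos]
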